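/- The unique binary operation ⋆ on {1,...,N} satisfying p ⋆ 1 = p+1 mod N and p ⋆ (q ⋆ 1) = (p ⋆ q) ⋆ (p ⋆ 1) is left distributive (p ⋆ (q ⋆ r) = (p ⋆ q) ⋆ (p ⋆ r) for all p,q,r) if and only if N is a power of 2. -/
import Mathlib

def LaverAxioms (N : ℕ) (star : ℕ → ℕ → ℕ) : Prop :=
  (∀ p q, p ∈ Set.Icc 1 N → q ∈ Set.Icc 1 N → star p q ∈ Set.Icc 1 N) ∧
  (∀ p ∈ Set.Icc 1 N, star p 1 = p % N + 1) ∧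
  (∀ p q, p ∈ Set.Icc 1 N → q ∈ Set.Icc 1 N →
    star p (star q 1) = star (star p q) (star p 1))

section Laver

variable {N : ℕ} {star : ℕ → ℕ → ℕ}

lemma memIcc {a : ℕ} (h1 : 1 ≤ a) (h2 : a ≤ N) : a ∈ Set.Icc 1 N :=
  Set.mem_Icc.mpr ⟨h1, h2⟩

lemma cl (h : LaverAxioms N star) {p q : ℕ} (hp1 : 1 ≤ p) (hpN : p ≤ N)
    (hq1 : 1 ≤ q) (hqN : q ≤ N) : 1 ≤ star p q ∧ star p q ≤ N :=
  Set.mem_Icc.mp (h.1 p q (memIcc hp1 hpN) (memIcc hq1 hqN))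

lemma sOneLt (h : LaverAxioms N star) {p : ℕ} (hp1 : 1 ≤ p) (hpN : p < N) :
    star p 1 = p + 1 := by
  rw [h.2.1 p (memIcc hp1 hpN.le), Nat.mod_eq_of_lt hpN]

lemma sOneN (h : LaverAxioms N star) (hN : 0 < N) : star N 1 = 1 := by
  rw [h.2.1 N (memIcc hN le_rfl), Nat.mod_self]

lemma ax3 (h : LaverAxioms N star) {p q : ℕ} (hp1 : 1 ≤ p) (hpN : p ≤ N)
    (hq1 : 1 ≤ q) (hqN : q ≤ N) :
    star p (star q 1) = star (star p q) (star p 1) :=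
  h.2.2 p q (memIcc hp1 hpN) (memIcc hq1 hqN)

/-- recursion step: for `q < N`, `p⋆(q+1) = (p⋆q)⋆(p⋆1)` -/
lemma succStep (h : LaverAxioms N star) {p q : ℕ} (hp1 : 1 ≤ p) (hpN : p ≤ N)
    (hq1 : 1 ≤ q) (hqN : q < N) :
    star p (q + 1) = star (star p q) (star p 1) := by
  have := ax3 h hp1 hpN hq1 hqN.le
  rwa [sOneLt h hq1 hqN] at this

/-- row N is the identity -/
lemma rowN (h : LaverAxioms N star) (hN : 0 < N) :
    ∀ q, 1 ≤ q → q ≤ N → star N q = q := by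
  intro q hq1
  induction q, hq1 using Nat.le_induction with
  | base => intro _; exact sOneN h hN
  | succ q hq1 ih =>
    intro hq2
    have hqN : q < N := by omega
    rw [succStep h hN le_rfl hq1 hqN, ih hqN.le, sOneN h hN, sOneLt h hq1 hqN]

/-- for `p < N`, `p < p⋆q` -/
lemma rowGt (h : LaverAxioms N star) (hN : 0 < N) :
    ∀ m p, N - p ≤ m → 1 ≤ p → p < N → ∀ q, 1 ≤ q → q ≤ N → p < star p q := by
  intro m
  induction m with
  | zero => intro p hm hp1 hpN; omega
  | succ m ih =>
    intro p hm hp1 hpN q hq1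
    induction q, hq1 using Nat.le_induction with
    | base => intro _; rw [sOneLt h hp1 hpN]; omega
    | succ q hq1 ihq =>
      intro hq2
      have hqN : q < N := by omega
      have ha := ihq hqN.le
      obtain ⟨ha1, haN⟩ := cl h hp1 hpN.le hq1 hqN.le
      rw [succStep h hp1 hpN.le hq1 hqN, sOneLt h hp1 hpN]
      rcases eq_or_lt_of_le haN with heq | hlt
      · rw [heq, rowN h hN (p+1) (by omega) (by omega)]; omega
      · have := ih (star p q) (by omega) (by omega) hlt (p+1) (by omega) (by omega)
        omega

/-- translation invariance of a row below the first N position -/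
lemma stepShift (h : LaverAxioms N star) {p : ℕ} (hp1 : 1 ≤ p) (hpN : p ≤ N) :
    ∀ r q1 q2, 1 ≤ q1 → 1 ≤ q2 → q1 + r ≤ N → q2 + r ≤ N →
      star p q1 = star p q2 → star p (q1 + r) = star p (q2 + r) := by
  intro r
  induction r with
  | zero => intro q1 q2 _ _ _ _ he; simpa using he
  | succ r ih =>
    intro q1 q2 h1 h2 hb1 hb2 he
    have e1 : q1 + (r+1) = (q1 + r) + 1 := by omega
    have e2 : q2 + (r+1) = (q2 + r) + 1 := by omega
    rw [e1, e2, succStep h hp1 hpN (q := q1 + r) (by omega) (by omega),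
        succStep h hp1 hpN (q := q2 + r) (by omega) (by omega),
        ih q1 q2 h1 h2 (by omega) (by omega) he]

/-- existence of minimal hitting time of N -/
lemma existMin (h : LaverAxioms N star) (hN : 0 < N) {p : ℕ} (hp1 : 1 ≤ p) (hpN : p ≤ N) :
    ∃ t, (1 ≤ t ∧ t ≤ N) ∧ star p t = N ∧ ∀ j, 1 ≤ j → j < t → star p j ≠ N := by
  have hex : ∃ t, 1 ≤ t ∧ t ≤ N ∧ star p t = N := by
    rcases eq_or_lt_of_le hpN with heq | hlt
    · exact ⟨N, hN, le_rfl, by rw [heq, rowN h hN N hN le_rfl]⟩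
    · have key : ∀ k, 1 ≤ k → k ≤ N - p →
          (∃ j, 1 ≤ j ∧ j ≤ k ∧ star p j = N) ∨ (p + k ≤ star p k) := by
        intro k hk1
        induction k, hk1 using Nat.le_induction with
        | base => intro _; right; rw [sOneLt h hp1 hlt]
        | succ k hk1 ihk =>
          intro hk2
          rcases ihk (by omega) with ⟨j, hj⟩ | hge
          · exact Or.inl ⟨j, hj.1, by omega, hj.2.2⟩
          · obtain ⟨ha1, haN⟩ := cl h hp1 hpN hk1 (by omega)
            rcases eq_or_lt_of_le haN with heq | hltk
            · exact Or.inl ⟨k, hk1, by omega, heq⟩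
            · right
              rw [succStep h hp1 hpN hk1 (by omega), sOneLt h hp1 hlt]
              have := rowGt h hN N (star p k) (by omega) (by omega) hltk (p+1)
                (by omega) (by omega)
              omega
      rcases key (N - p) (by omega) le_rfl with ⟨j, hj1, hj2, hj3⟩ | hge
      · exact ⟨j, hj1, by omega, hj3⟩
      · obtain ⟨_, haN⟩ := cl h hp1 hpN (by omega : 1 ≤ N - p) (by omega)
        exact ⟨N - p, by omega, by omega, by omega⟩
  classical
  obtain ⟨t, ht1, htN, hthit⟩ := hex
  have hex' : ∃ t, 1 ≤ t ∧ star p t = N := ⟨t, ht1, hthit⟩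
  refine ⟨Nat.find hex', ⟨(Nat.find_spec hex').1, ?_⟩, (Nat.find_spec hex').2, ?_⟩
  · exact le_trans (Nat.find_min' hex' ⟨ht1, hthit⟩) htN
  · intro j hj1 hj2 hjhit
    exact Nat.find_min hex' hj2 ⟨hj1, hjhit⟩

end Laver

section Laver2

variable {N : ℕ} {star : ℕ → ℕ → ℕ}

/-- periodicity: if `p⋆t = N` then `p⋆(t+r) = p⋆r` -/
lemma periodShift (h : LaverAxioms N star) (hN : 0 < N) {p t : ℕ}
    (hp1 : 1 ≤ p) (hpN : p ≤ N) (ht1 : 1 ≤ t) (hthit : star p t = N) :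
    ∀ r, 1 ≤ r → t + r ≤ N → star p (t + r) = star p r := by
  intro r hr1
  induction r, hr1 using Nat.le_induction with
  | base =>
    intro hb
    obtain ⟨hs1, hsN⟩ := cl h hp1 hpN hp1 hpN  -- junk, replaced below
    rw [succStep h hp1 hpN (q := t) ht1 (by omega), hthit]
    obtain ⟨h1', hN'⟩ := cl h hp1 hpN (le_refl 1) (by omega)
    rw [rowN h hN (star p 1) h1' hN']
  | succ r hr1 ih =>
    intro hb
    have e : t + (r + 1) = (t + r) + 1 := by omega
    rw [e, succStep h hp1 hpN (q := t + r) (by omega) (by omega), ih (by omega),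
      ← succStep h hp1 hpN (q := r) hr1 (by omega)]

/-- reduction mod the period -/
lemma periodRed (h : LaverAxioms N star) (hN : 0 < N) {p t : ℕ}
    (hp1 : 1 ≤ p) (hpN : p ≤ N) (ht1 : 1 ≤ t) (htN : t ≤ N) (hthit : star p t = N) :
    ∀ q, 1 ≤ q → q ≤ N → star p q = star p ((q - 1) % t + 1) := by
  intro q
  induction q using Nat.strong_induction_on with
  | _ q ihq =>
    intro hq1 hqN
    by_cases hqt : q ≤ t
    · rw [Nat.mod_eq_of_lt (by omega)]
      congr 1; omega
    · have e1 : q = t + (q - t) := by omega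
      have e2 : star p q = star p (q - t) := by
        have := periodShift h hN hp1 hpN ht1 hthit (q - t) (by omega) (by omega)
        rwa [show t + (q - t) = q by omega] at this
      rw [e2, ihq (q - t) (by omega) (by omega) (by omega)]
      congr 2
      have e3 : q - 1 = (q - t - 1) + t := by omega
      rw [e3, Nat.add_mod_right]

/-- if `t ∣ q` and `p⋆t = N` then `p⋆q = N` -/
lemma hitOfDvd (h : LaverAxioms N star) (hN : 0 < N) {p t q : ℕ}
    (hp1 : 1 ≤ p) (hpN : p ≤ N) (ht1 : 1 ≤ t) (htN : t ≤ N) (hthit : star p t = N)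
    (hq1 : 1 ≤ q) (hqN : q ≤ N) (hdvd : t ∣ q) : star p q = N := by
  obtain ⟨c, rfl⟩ := hdvd
  rcases c with _ | c'
  · omega
  · rw [periodRed h hN hp1 hpN ht1 htN hthit _ hq1 hqN]
    have e1 : t * (c' + 1) - 1 = t * c' + (t - 1) := by
      have : t * (c' + 1) = t * c' + t := by ring
      omega
    rw [e1, Nat.mul_add_mod, Nat.mod_eq_of_lt (by omega)]
    have : t - 1 + 1 = t := by omega
    rw [this, hthit]

/-- minimality: if `p⋆q = N` then `t ∣ q` (t the minimal hitting time) -/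
lemma dvdOfHit (h : LaverAxioms N star) (hN : 0 < N) {p t q : ℕ}
    (hp1 : 1 ≤ p) (hpN : p ≤ N)
    (hts : (1 ≤ t ∧ t ≤ N) ∧ star p t = N ∧ ∀ j, 1 ≤ j → j < t → star p j ≠ N)
    (hq1 : 1 ≤ q) (hqN : q ≤ N) (hhit : star p q = N) : t ∣ q := by
  obtain ⟨⟨ht1, htN⟩, hthit, htmin⟩ := hts
  have hred := periodRed h hN hp1 hpN ht1 htN hthit q hq1 hqN
  rw [hhit] at hred
  have hrlt : (q - 1) % t < t := Nat.mod_lt _ (by omega)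
  have hr : (q - 1) % t + 1 = t := by
    by_contra hne
    exact htmin _ (by omega) (by omega) hred.symm
  rcases eq_or_lt_of_le ht1 with h1 | h2
  · rw [← h1]; exact one_dvd q
  · apply Nat.dvd_of_mod_eq_zero
    have e : q = (q - 1) + 1 := by omega
    rw [e, Nat.add_mod, Nat.mod_eq_of_lt (show 1 < t by omega)]
    have : (q - 1) % t = t - 1 := by omega
    rw [this]
    have : t - 1 + 1 = t := by omega
    rw [this, Nat.mod_self]

/-- wrap: `p⋆N = N` -/
lemma wrap (h : LaverAxioms N star) (hN : 0 < N) {p : ℕ}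
    (hp1 : 1 ≤ p) (hpN : p ≤ N) : star p N = N := by
  rcases eq_or_lt_of_le hpN with heq | hlt
  · rw [heq]; exact rowN h hN N hN le_rfl
  · have key := ax3 h hp1 hpN hN le_rfl
    rw [sOneN h hN, sOneLt h hp1 hlt] at key
    obtain ⟨ha1, haN⟩ := cl h hp1 hpN hN le_rfl
    rcases eq_or_lt_of_le haN with heq' | hlt'
    · exact heq'
    · exfalso
      have hgt := rowGt h hN N p (by omega) hp1 hlt N hN le_rfl
      have := rowGt h hN N (star p N) (by omega) (by omega) hlt' (p + 1) (by omega) (by omega)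
      omega

end Laver2

section Laver3

variable {N : ℕ} {star : ℕ → ℕ → ℕ}

lemma colA (h : LaverAxioms N star) (hN : 0 < N) {e : ℕ} (he : 2^e ∣ N)
    (hLC : ∀ a, N - 2^(e+1) < a → a < N → star a (2^e) = N) :
    ∀ a, N - 2^(e+1) < a → a < N → star a (N - 2^(e+1) + 1) = a + 1 := by
  intro a ha1 ha2
  have hepos : 0 < 2^e := pow_pos (by norm_num) e
  have heN : 2^e ≤ N := Nat.le_of_dvd hN he
  obtain ⟨t, ⟨ht1, htN⟩, hthit, htmin⟩ := existMin h hN (show 1 ≤ a by omega) ha2.le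
  have htd : t ∣ 2^e := dvdOfHit h hN (by omega) ha2.le ⟨⟨ht1, htN⟩, hthit, htmin⟩
    hepos heN (hLC a ha1 ha2)
  have htσ : t ∣ N - 2^(e+1) := dvd_trans htd (Nat.dvd_sub he ⟨2, by ring⟩)
  have hred := periodRed h hN (show 1 ≤ a by omega) ha2.le ht1 htN hthit
    (N - 2^(e+1) + 1) (by omega) (by omega)
  rw [hred]
  have hz : (N - 2^(e+1) + 1 - 1) % t = 0 := by
    simp only [Nat.add_sub_cancel]
    obtain ⟨c, hc⟩ := htσ
    rw [hc, Nat.mul_mod_right]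
  rw [hz, sOneLt h (by omega) ha2]

lemma colB (h : LaverAxioms N star) (hN : 0 < N) {e : ℕ} (he : 2^e ∣ N)
    (hle : 2^(e+1) ≤ N) (hσ1 : 1 ≤ N - 2^(e+1))
    (hLC : ∀ a, N - 2^(e+1) < a → a < N → star a (2^e) = N) :
    ∀ x, 1 ≤ x → x ≤ 2^(e+1) → star (N - 2^(e+1)) x = (N - 2^(e+1)) + x := by
  have he1pos : 0 < 2^(e+1) := pow_pos (by norm_num) (e+1)
  intro x hx1
  induction x, hx1 using Nat.le_induction with
  | base => intro _; rw [sOneLt h hσ1 (by omega)]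
  | succ x hx1 ih =>
    intro hx2
    rw [succStep h hσ1 (by omega) (q := x) hx1 (by omega), ih (by omega),
      sOneLt h hσ1 (by omega), colA h hN he hLC (N - 2^(e+1) + x) (by omega) (by omega)]
    omega

lemma colC (h : LaverAxioms N star) (hN : 0 < N) {e : ℕ} (he1 : 2^(e+1) ∣ N)
    (hlt : 2^(e+1) < N)
    (hLC : ∀ a, N - 2^(e+1) < a → a < N → star a (2^e) = N) :
    ∀ q, 1 ≤ q → q ≤ N → star (N - 2^(e+1)) q % 2^(e+1) = q % 2^(e+1) := by
  have he1pos : 0 < 2^(e+1) := pow_pos (by norm_num) (e+1)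
  have he : 2^e ∣ N := dvd_trans ⟨2, by ring⟩ he1
  have hσ1 : 1 ≤ N - 2^(e+1) := by omega
  have hB := colB h hN he hlt.le hσ1 hLC
  intro q hq1 hqN
  have hhit : star (N - 2^(e+1)) (2^(e+1)) = N := by
    rw [hB (2^(e+1)) he1pos le_rfl]; omega
  rw [periodRed h hN hσ1 (by omega) he1pos hlt.le hhit q hq1 hqN,
    hB _ (by omega) (by omega : (q-1) % 2^(e+1) + 1 ≤ 2^(e+1))]
  · obtain ⟨c, hc⟩ := Nat.dvd_sub he1 (dvd_refl (2^(e+1)))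
    rw [hc, Nat.mul_add_mod]
    rcases Nat.lt_or_ge 1 (2^(e+1)) with h2 | h2
    · conv_rhs => rw [show q = (q - 1) + 1 by omega, Nat.add_mod, Nat.mod_eq_of_lt h2]
    · have h1 : 2^(e+1) = 1 := by omega
      rw [h1]
      simp [Nat.mod_one]

end Laver3

section Laver4

variable {N : ℕ} {star : ℕ → ℕ → ℕ}

lemma LC (h : LaverAxioms N star) (hN : 0 < N) :
    ∀ j, 2^j ∣ N → 2^(j+1) ≤ N → ∀ p, N - 2^(j+1) < p → p < N → star p (2^j) = N := by
  intro j
  induction j with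
  | zero =>
    intro _ h2 p hp1 hp2
    have e : (2:ℕ)^(0+1) = 2 := by norm_num
    rw [e] at h2 hp1
    have hp : p = N - 1 := by omega
    subst hp
    rw [pow_zero, sOneLt h (by omega) (by omega)]
    omega
  | succ j ih =>
    intro hdvd hle p hp1 hpN
    have hMpos : 0 < 2^(j+1) := pow_pos (by norm_num) (j+1)
    have hjpos : 0 < 2^j := pow_pos (by norm_num) j
    have e2M : (2:ℕ)^(j+1+1) = 2^(j+1) * 2 := pow_succ 2 (j+1)
    have eM : (2:ℕ)^(j+1) = 2^j * 2 := pow_succ 2 j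
    have hdj : 2^j ∣ N := dvd_trans ⟨2, by ring⟩ hdvd
    have hjN : 2^j ≤ N := Nat.le_of_dvd hN hdj
    have hMN : 2^(j+1) < N := by omega
    have hLCj : ∀ a, N - 2^(j+1) < a → a < N → star a (2^j) = N :=
      ih hdj (by omega)
    have hcolB := colB h hN hdj hMN.le (by omega) hLCj
    have hcolC := colC h hN hdvd hMN hLCj
    -- minimal period of rows in the top window divides 2^j
    have oupper : ∀ a, N - 2^(j+1) < a → a < N →
        ∃ t, ((1 ≤ t ∧ t ≤ N) ∧ star a t = N ∧ ∀ i, 1 ≤ i → i < t → star a i ≠ N) ∧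
          t ∣ 2^j := by
      intro a ha1 ha2
      obtain ⟨t, hts⟩ := existMin h hN (show 1 ≤ a by omega) ha2.le
      exact ⟨t, hts, dvdOfHit h hN (by omega) ha2.le hts hjpos hjN (hLCj a ha1 ha2)⟩
    -- window rows are 2^(j+1)-periodic
    have shift2 : ∀ a, N - 2^(j+1) < a → a < N → ∀ y, 1 ≤ y → y + 2^(j+1) ≤ N →
        star a (y + 2^(j+1)) = star a y := by
      intro a ha1 ha2 y hy1 hy2
      obtain ⟨t, ⟨⟨ht1, htN⟩, hthit, _⟩, htd⟩ := oupper a ha1 ha2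
      obtain ⟨c, hc⟩ := dvd_trans htd (⟨2, by ring⟩ : (2:ℕ)^j ∣ 2^(j+1))
      rw [periodRed h hN (by omega) ha2.le ht1 htN hthit (y + 2^(j+1)) (by omega) hy2,
          periodRed h hN (by omega) ha2.le ht1 htN hthit y hy1 (by omega)]
      congr 2
      rw [show y + 2^(j+1) - 1 = (y - 1) + t * c by omega, Nat.add_mul_mod_self_left]
    -- congruence of rows p₀ and p₀ + 2^(j+1) modulo 2^(j+1)
    have cong : ∀ m p₀, N - p₀ ≤ m → N - 2^(j+1) * 2 < p₀ → p₀ ≤ N - 2^(j+1) →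
        ∀ q, 1 ≤ q → q ≤ N →
          star p₀ q % 2^(j+1) = star (p₀ + 2^(j+1)) q % 2^(j+1) := by
      intro m
      induction m with
      | zero => intro p₀ hm hp01 hp02 q hq1 hqN; omega
      | succ m ihm =>
        intro p₀ hm hp01 hp02 q hq1 hqN
        rcases eq_or_lt_of_le hp02 with heq | hlt
        · rw [heq, show N - 2^(j+1) + 2^(j+1) = N by omega, rowN h hN q hq1 hqN,
            hcolC q hq1 hqN]
        · revert hqN
          induction q, hq1 using Nat.le_induction with
          | base =>
            intro _
            rw [sOneLt h (by omega) (by omega), sOneLt h (by omega) (by omega),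
              show p₀ + 2^(j+1) + 1 = (p₀ + 1) + 2^(j+1) * 1 by ring,
              Nat.add_mul_mod_self_left]
          | succ q hq1 ihq =>
            intro hq2
            have hqN' : q ≤ N := by omega
            have hcq := ihq hqN'
            have hxgt := rowGt h hN N p₀ (by omega) (by omega) (by omega) q hq1 hqN'
            have hx'gt := rowGt h hN N (p₀ + 2^(j+1)) (by omega) (by omega) (by omega)
              q hq1 hqN'
            obtain ⟨hx1, hxN⟩ := cl h (show 1 ≤ p₀ by omega) (by omega) hq1 hqN'
            obtain ⟨hx'1, hx'N⟩ := cl h (show 1 ≤ p₀ + 2^(j+1) by omega) (by omega) hq1 hqN'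
            rw [succStep h (show 1 ≤ p₀ by omega) (by omega) (q := q) hq1 (by omega),
              sOneLt h (by omega) (by omega),
              succStep h (show 1 ≤ p₀ + 2^(j+1) by omega) (by omega) (q := q) hq1 (by omega),
              sOneLt h (by omega) (by omega)]
            by_cases hx'_eq : star (p₀ + 2^(j+1)) q = N
            · have hx0 : star p₀ q % 2^(j+1) = 0 := by
                rw [hcq, hx'_eq]
                obtain ⟨c, hc⟩ := hdvd
                rw [hc, Nat.mul_mod_right]
              have hdx : 2^(j+1) ∣ star p₀ q := Nat.dvd_of_mod_eq_zero hx0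
              have hxcases : star p₀ q = N - 2^(j+1) ∨ star p₀ q = N := by
                obtain ⟨c, hc⟩ := Nat.dvd_sub hdvd hdx
                rcases c with _ | _ | c
                · right; omega
                · left; omega
                · exfalso
                  have : 2^(j+1) * 2 ≤ 2^(j+1) * (c+1+1) := Nat.mul_le_mul_left _ (by omega)
                  omega
              rcases hxcases with hxσ | hxn
              · rw [hxσ, hx'_eq, rowN h hN (p₀ + 2^(j+1) + 1) (by omega) (by omega),
                  hcolC (p₀ + 1) (by omega) (by omega),
                  show p₀ + 2^(j+1) + 1 = (p₀ + 1) + 2^(j+1) * 1 by ring,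
                  Nat.add_mul_mod_self_left]
              · rw [hxn, hx'_eq, rowN h hN (p₀ + 1) (by omega) (by omega),
                  rowN h hN (p₀ + 2^(j+1) + 1) (by omega) (by omega),
                  show p₀ + 2^(j+1) + 1 = (p₀ + 1) + 2^(j+1) * 1 by ring,
                  Nat.add_mul_mod_self_left]
            · have hx'lt : star (p₀ + 2^(j+1)) q < N := lt_of_le_of_ne hx'N hx'_eq
              by_cases hxle : star p₀ q ≤ N - 2^(j+1)
              · -- x' = x + 2^(j+1)
                have hxx' : star (p₀ + 2^(j+1)) q = star p₀ q + 2^(j+1) := by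
                  have hle' : star p₀ q ≤ star (p₀ + 2^(j+1)) q := by omega
                  have hdvd' := (Nat.modEq_iff_dvd' hle').mp hcq
                  obtain ⟨c, hc⟩ := hdvd'
                  rcases c with _ | _ | c
                  · omega
                  · omega
                  · exfalso
                    have : 2^(j+1) * 2 ≤ 2^(j+1) * (c+1+1) := Nat.mul_le_mul_left _ (by omega)
                    omega
                have step1 : star (star p₀ q) (p₀ + 1) % 2^(j+1) =
                    star (star p₀ q + 2^(j+1)) (p₀ + 1) % 2^(j+1) :=
                  ihm (star p₀ q) (by omega) (by omega) (by omega) (p₀ + 1)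
                    (by omega) (by omega)
                rw [hxx', step1]
                rcases eq_or_lt_of_le (show star p₀ q + 2^(j+1) ≤ N by omega)
                  with heqN | hltN
                · rw [heqN, rowN h hN (p₀ + 1) (by omega) (by omega),
                    rowN h hN (p₀ + 2^(j+1) + 1) (by omega) (by omega),
                    show p₀ + 2^(j+1) + 1 = (p₀ + 1) + 2^(j+1) * 1 by ring,
                    Nat.add_mul_mod_self_left]
                · rw [show p₀ + 2^(j+1) + 1 = (p₀ + 1) + 2^(j+1) by ring,
                    shift2 (star p₀ q + 2^(j+1)) (by omega) hltN (p₀ + 1) (by omega)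
                      (by omega)]
              · -- x' = x
                have hxx' : star p₀ q = star (p₀ + 2^(j+1)) q := by
                  rcases le_total (star p₀ q) (star (p₀ + 2^(j+1)) q) with hle' | hle'
                  · have hdvd' := (Nat.modEq_iff_dvd' hle').mp hcq
                    obtain ⟨c, hc⟩ := hdvd'
                    rcases c with _ | c
                    · omega
                    · exfalso
                      have : 2^(j+1) * 1 ≤ 2^(j+1) * (c+1) := Nat.mul_le_mul_left _ (by omega)
                      omega
                  · have hdvd' := (Nat.modEq_iff_dvd' hle').mp hcq.symm
                    obtain ⟨c, hc⟩ := hdvd'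
                    rcases c with _ | c
                    · omega
                    · exfalso
                      have : 2^(j+1) * 1 ≤ 2^(j+1) * (c+1) := Nat.mul_le_mul_left _ (by omega)
                      omega
                rw [← hxx',
                  show p₀ + 2^(j+1) + 1 = (p₀ + 1) + 2^(j+1) by ring,
                  shift2 (star p₀ q) (by omega) (by omega) (p₀ + 1) (by omega) (by omega)]
    -- now the main goal
    rcases lt_trichotomy p (N - 2^(j+1)) with hplt | hpeq | hpgt
    · -- low zone
      have hp'1 : N - 2^(j+1) < p + 2^(j+1) := by omega
      have hp'N : p + 2^(j+1) < N := by omega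
      obtain ⟨t, hts', htd⟩ := oupper (p + 2^(j+1)) hp'1 hp'N
      obtain ⟨⟨ht1, htN⟩, hthit', htmin'⟩ := hts'
      obtain ⟨op, ⟨⟨hop1, hopN⟩, hophit, hopmin⟩⟩ := existMin h hN (show 1 ≤ p by omega)
        hpN.le
      have htj : t ≤ 2^j := Nat.le_of_dvd hjpos htd
      have hNmod : N % 2^(j+1) = 0 := by
        obtain ⟨c, hc⟩ := hdvd; rw [hc, Nat.mul_mod_right]
      -- t ∣ op
      have hcongop := cong N p (by omega) (by omega) hplt.le op hop1 hopN
      rw [hophit, hNmod] at hcongop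
      have hv1 := rowGt h hN N (p + 2^(j+1)) (by omega) (by omega) hp'N op hop1 hopN
      obtain ⟨hv2, hv3⟩ := cl h (show 1 ≤ p + 2^(j+1) by omega) hp'N.le hop1 hopN
      have hvN : star (p + 2^(j+1)) op = N := by
        have hdv : 2^(j+1) ∣ N - star (p + 2^(j+1)) op :=
          Nat.dvd_sub hdvd (Nat.dvd_of_mod_eq_zero hcongop.symm)
        obtain ⟨c, hc⟩ := hdv
        rcases c with _ | c
        · omega
        · exfalso
          have : 2^(j+1) * 1 ≤ 2^(j+1) * (c+1) := Nat.mul_le_mul_left _ (by omega)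
          omega
      have htop : t ∣ op := dvdOfHit h hN (by omega) hp'N.le
        ⟨⟨ht1, htN⟩, hthit', htmin'⟩ hop1 hopN hvN
      -- z1 = star p t
      have hz1cong := cong N p (by omega) (by omega) hplt.le t ht1 htN
      rw [hthit', hNmod] at hz1cong
      have hz1gt := rowGt h hN N p (by omega) (by omega) hpN t ht1 htN
      obtain ⟨hz1a, hz1b⟩ := cl h (show 1 ≤ p by omega) hpN.le ht1 htN
      have hz1cases : star p t = N - 2^(j+1) ∨ star p t = N := by
        have hdz : 2^(j+1) ∣ N - star p t :=
          Nat.dvd_sub hdvd (Nat.dvd_of_mod_eq_zero hz1cong)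
        obtain ⟨c, hc⟩ := hdz
        rcases c with _ | _ | c
        · right; omega
        · left; omega
        · exfalso
          have : 2^(j+1) * 2 ≤ 2^(j+1) * (c+1+1) := Nat.mul_le_mul_left _ (by omega)
          omega
      rcases hz1cases with hz1σ | hz1N
      · -- z1 = N - 2^(j+1); look at z2 = star p (2t)
        have h2t : 2 * t ≤ N := by omega
        have hz2' : star (p + 2^(j+1)) (2*t) = N :=
          hitOfDvd h hN (by omega) hp'N.le ht1 htN hthit' (by omega) h2t ⟨2, by ring⟩
        have hz2cong := cong N p (by omega) (by omega) hplt.le (2*t) (by omega) h2t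
        rw [hz2', hNmod] at hz2cong
        have hz2gt := rowGt h hN N p (by omega) (by omega) hpN (2*t) (by omega) h2t
        obtain ⟨hz2a, hz2b⟩ := cl h (show 1 ≤ p by omega) hpN.le (by omega : 1 ≤ 2*t) h2t
        have hz2cases : star p (2*t) = N - 2^(j+1) ∨ star p (2*t) = N := by
          have hdz : 2^(j+1) ∣ N - star p (2*t) :=
            Nat.dvd_sub hdvd (Nat.dvd_of_mod_eq_zero hz2cong)
          obtain ⟨c, hc⟩ := hdz
          rcases c with _ | _ | c
          · right; omega
          · left; omega
          · exfalso
            have : 2^(j+1) * 2 ≤ 2^(j+1) * (c+1+1) := Nat.mul_le_mul_left _ (by omega)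
            omega
        rcases hz2cases with hz2σ | hz2N
        · -- contradiction: the row never reaches N
          exfalso
          have hall : ∀ m', 1 ≤ m' → m' * t ≤ N → star p (m' * t) = N - 2^(j+1) := by
            intro m' hm'1
            induction m', hm'1 using Nat.le_induction with
            | base => intro _; rw [one_mul]; exact hz1σ
            | succ m' hm'1 ihm' =>
              intro hb
              have e : (m'+1)*t = m'*t + t := by ring
              have hmt1 : 1 ≤ m' * t := by
                have := Nat.mul_le_mul hm'1 ht1; omega
              have hmtN : m' * t ≤ N := by omega
              have heqv : star p (m' * t) = star p t := by
                rw [ihm' hmtN, hz1σ]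
              have hstep := stepShift h (show 1 ≤ p by omega) hpN.le t (m'*t) t
                hmt1 ht1 (by omega) (by omega) heqv
              rw [e, hstep, show t + t = 2*t by ring, hz2σ]
          obtain ⟨c, hc⟩ := htop
          have hc1 : 1 ≤ c := by
            rcases c with _ | c
            · omega
            · omega
          have hcb : c * t ≤ N := by rw [mul_comm]; omega
          have := hall c hc1 hcb
          rw [mul_comm, ← hc, hophit] at this
          omega
        · -- star p (2t) = N so op ∣ 2t ∣ 2^(j+1)
          have hop2t : op ∣ 2*t := dvdOfHit h hN (by omega) hpN.le
            ⟨⟨hop1, hopN⟩, hophit, hopmin⟩ (by omega) h2t hz2N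
          have h2tM : 2*t ∣ 2^(j+1) := by
            rw [eM, mul_comm (2^j) 2]
            exact mul_dvd_mul_left 2 htd
          exact hitOfDvd h hN (by omega) hpN.le hop1 hopN hophit hMpos hMN.le
            (dvd_trans hop2t h2tM)
      · -- star p t = N so op ∣ t ∣ 2^j ∣ 2^(j+1)
        have hopt : op ∣ t := dvdOfHit h hN (by omega) hpN.le
          ⟨⟨hop1, hopN⟩, hophit, hopmin⟩ ht1 htN hz1N
        exact hitOfDvd h hN (by omega) hpN.le hop1 hopN hophit hMpos hMN.le
          (dvd_trans hopt (dvd_trans htd ⟨2, by ring⟩))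
    · -- p = N - 2^(j+1)
      rw [hpeq, hcolB (2^(j+1)) hMpos le_rfl]
      omega
    · -- top window
      obtain ⟨t, ⟨⟨ht1, htN⟩, hthit, _⟩, htd⟩ := oupper p hpgt hpN
      exact hitOfDvd h hN (by omega) hpN.le ht1 htN hthit hMpos hMN.le
        (dvd_trans htd ⟨2, by ring⟩)

end Laver4

section Laver5

variable {N : ℕ} {star : ℕ → ℕ → ℕ}

lemma powDvd (h : LaverAxioms N star) (hN : 0 < N) :
    ∀ j, 2^j ≤ N → 2^j ∣ N := by
  intro j
  induction j with
  | zero => intro _; simpa using one_dvd N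
  | succ j ih =>
    intro hle
    have hMpos : 0 < 2^(j+1) := pow_pos (by norm_num) (j+1)
    have eM : (2:ℕ)^(j+1) = 2^j * 2 := pow_succ 2 j
    have hdj : 2^j ∣ N := ih (by omega)
    rcases eq_or_lt_of_le hle with heq | hlt
    · exact heq ▸ dvd_refl _
    · have hLCj := LC h hN j hdj hlt.le
      have hσ1 : 1 ≤ N - 2^(j+1) := by omega
      have hB := colB h hN hdj hlt.le hσ1 hLCj
      obtain ⟨t, ⟨ht1, htN⟩, hthit, htmin⟩ := existMin h hN hσ1 (by omega)
      have htle : t ≤ 2^(j+1) := by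
        by_contra hgt
        exact htmin (2^(j+1)) hMpos (by omega)
          (by rw [hB (2^(j+1)) hMpos le_rfl]; omega)
      have htge : t = 2^(j+1) := by
        rcases eq_or_lt_of_le htle with he | hlt'
        · exact he
        · exfalso
          have := hB t ht1 (by omega)
          rw [this] at hthit
          omega
      have hwrap : star (N - 2^(j+1)) N = N := wrap h hN hσ1 (by omega)
      have := dvdOfHit h hN hσ1 (by omega) ⟨⟨ht1, htN⟩, hthit, htmin⟩ hN le_rfl hwrap
      rwa [htge] at this

lemma isPowTwo (h : LaverAxioms N star) (hN : 0 < N) : ∃ k, N = 2^k := by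
  refine ⟨Nat.log 2 N, ?_⟩
  have h1 : 2^(Nat.log 2 N) ≤ N := Nat.pow_log_le_self 2 (by omega)
  have h2 : N < 2^(Nat.log 2 N + 1) := Nat.lt_pow_succ_log_self (by norm_num) N
  obtain ⟨c, hc⟩ := powDvd h hN (Nat.log 2 N) h1
  have e : (2:ℕ)^(Nat.log 2 N + 1) = 2^(Nat.log 2 N) * 2 := pow_succ 2 _
  rcases c with _ | _ | c
  · omega
  · omega
  · exfalso
    have : 2^(Nat.log 2 N) * 2 ≤ 2^(Nat.log 2 N) * (c+1+1) :=
      Nat.mul_le_mul_left _ (by omega)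
    omega

/-- the successor map `x ↦ x % N + 1` is injective on `[1, N]` -/
lemma sigmaInj (h : LaverAxioms N star) (hN : 0 < N) {c c' : ℕ}
    (hc1 : 1 ≤ c) (hcN : c ≤ N) (hc'1 : 1 ≤ c') (hc'N : c' ≤ N)
    (he : star c 1 = star c' 1) : c = c' := by
  rw [h.2.1 c (memIcc hc1 hcN), h.2.1 c' (memIcc hc'1 hc'N)] at he
  rcases eq_or_lt_of_le hcN with h1 | h1 <;> rcases eq_or_lt_of_le hc'N with h2 | h2
  · omega
  · rw [h1, Nat.mod_self, Nat.mod_eq_of_lt h2] at he; omega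
  · rw [h2, Nat.mod_self, Nat.mod_eq_of_lt h1] at he; omega
  · rw [Nat.mod_eq_of_lt h1, Nat.mod_eq_of_lt h2] at he; omega

/-- the successor map is surjective onto `[1, N]` -/
lemma sigmaSurj (h : LaverAxioms N star) (hN : 0 < N) :
    ∀ v, 1 ≤ v → v ≤ N → ∃ c, (1 ≤ c ∧ c ≤ N) ∧ star c 1 = v := by
  intro v hv1 hvN
  by_cases hv : v = 1
  · exact ⟨N, ⟨hN, le_rfl⟩, by rw [sOneN h hN, hv]⟩
  · exact ⟨v - 1, ⟨by omega, by omega⟩, by rw [sOneLt h (by omega) (by omega)]; omega⟩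

/-- left distributivity, by double downward induction -/
lemma leftDist (h : LaverAxioms N star) (hN : 0 < N) :
    ∀ m p, 1 ≤ p → p ≤ N → N - p ≤ m → ∀ q r, 1 ≤ q → q ≤ N → 1 ≤ r → r ≤ N →
      star p (star q r) = star (star p q) (star p r) := by
  intro m
  induction m with
  | zero =>
    intro p hp1 hpN hm q r hq1 hqN hr1 hrN
    have hpeq : p = N := by omega
    subst hpeq
    obtain ⟨ha1, haN⟩ := cl h hq1 hqN hr1 hrN
    rw [rowN h hN (star q r) ha1 haN, rowN h hN q hq1 hqN, rowN h hN r hr1 hrN]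
  | succ m ihm =>
    intro p hp1 hpN hm
    rcases eq_or_lt_of_le hpN with hpeq | hplt
    · subst hpeq
      intro q r hq1 hqN hr1 hrN
      obtain ⟨ha1, haN⟩ := cl h hq1 hqN hr1 hrN
      rw [rowN h hN (star q r) ha1 haN, rowN h hN q hq1 hqN, rowN h hN r hr1 hrN]
    · -- p < N ; uses E(p') for all p' > p
      have Eup : ∀ a, p < a → a ≤ N → ∀ q r, 1 ≤ q → q ≤ N → 1 ≤ r → r ≤ N →
          star a (star q r) = star (star a q) (star a r) := by
        intro a ha1 ha2
        exact ihm a (by omega) ha2 (by omega)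
      -- composition of translations with upper first factor is a translation
      have compplus : ∀ n a b, p < a → a ≤ N → 1 ≤ b → b ≤ N → N - a ≤ n →
          ∃ c, (1 ≤ c ∧ c ≤ N) ∧ ∀ x, 1 ≤ x → x ≤ N →
            star a (star b x) = star c x := by
        intro n
        induction n with
        | zero =>
          intro a b ha1 ha2 hb1 hb2 hn
          have : a = N := by omega
          subst this
          refine ⟨b, ⟨hb1, hb2⟩, fun x hx1 hxN => ?_⟩
          obtain ⟨hbx1, hbxN⟩ := cl h hb1 hb2 hx1 hxN
          rw [rowN h hN (star b x) hbx1 hbxN]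
        | succ n ihn =>
          intro a b ha1 ha2 hb1 hb2 hn
          rcases eq_or_lt_of_le ha2 with haeq | halt
          · subst haeq
            refine ⟨b, ⟨hb1, hb2⟩, fun x hx1 hxN => ?_⟩
            obtain ⟨hbx1, hbxN⟩ := cl h hb1 hb2 hx1 hxN
            rw [rowN h hN (star b x) hbx1 hbxN]
          · have hgt := rowGt h hN N a (by omega) (by omega) halt b hb1 hb2
            obtain ⟨hab1, habN⟩ := cl h (by omega) ha2 hb1 hb2
            obtain ⟨c, hc, hcall⟩ := ihn (star a b) a (by omega) habN (by omega) ha2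
              (by omega)
            refine ⟨c, hc, fun x hx1 hxN => ?_⟩
            rw [Eup a ha1 ha2 b x hb1 hb2 hx1 hxN, hcall x hx1 hxN]
      -- row-like functions are rows
      have RL : ∀ u, 1 ≤ u → u ≤ N →
          (∀ r, 1 ≤ r → r ≤ N →
            star p (star u (star r 1)) =
              star (star p (star u r)) (star p (star u 1))) →
          ∃ c, (1 ≤ c ∧ c ≤ N) ∧ star c 1 = star p (star u 1) ∧
            ∀ x, 1 ≤ x → x ≤ N → star p (star u x) = star c x := by
        intro u hu1 huN hK
        obtain ⟨hσ1, hσN⟩ := cl h hu1 huN (le_refl 1) (by omega)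
        obtain ⟨hv1, hvN⟩ := cl h hp1 hpN hσ1 hσN
        obtain ⟨c, hcb, hcσ⟩ := sigmaSurj h hN (star p (star u 1)) hv1 hvN
        refine ⟨c, hcb, hcσ, ?_⟩
        intro x hx1
        induction x, hx1 using Nat.le_induction with
        | base => intro _; exact hcσ.symm
        | succ x hx1 ihx =>
          intro hx2
          have hxN : x ≤ N := by omega
          have e1 : (x : ℕ) + 1 = star x 1 := by
            rw [sOneLt h hx1 (by omega)]
          rw [e1, hK x hx1 hxN, ihx hxN, ← hcσ,
            ← ax3 h hcb.1 hcb.2 hx1 hxN]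
      -- the K property, by downward induction on q
      have K : ∀ n q, 1 ≤ q → q ≤ N → N - q ≤ n → ∀ r, 1 ≤ r → r ≤ N →
          star p (star q (star r 1)) =
            star (star p (star q r)) (star p (star q 1)) := by
        intro n
        induction n with
        | zero =>
          intro q hq1 hqN hn r hr1 hrN
          have : q = N := by omega
          subst this
          obtain ⟨hσ1, hσN⟩ := cl h hr1 hrN (le_refl 1) (by omega)
          rw [rowN h hN (star r 1) hσ1 hσN, rowN h hN r hr1 hrN, sOneN h hN,
            ax3 h hp1 hpN hr1 hrN]
        | succ n ihn =>
          intro q hq1 hqN hn r hr1 hrN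
          rcases eq_or_lt_of_le hqN with hqeq | hqlt
          · subst hqeq
            obtain ⟨hσ1, hσN⟩ := cl h hr1 hrN (le_refl 1) (by omega)
            rw [rowN h hN (star r 1) hσ1 hσN, rowN h hN r hr1 hrN, sOneN h hN,
              ax3 h hp1 hpN hr1 hrN]
          · -- q < N
            rw [ax3 h hq1 hqN hr1 hrN]
            have hugt := rowGt h hN N q (by omega) hq1 hqlt r hr1 hrN
            obtain ⟨hu1, huN⟩ := cl h hq1 hqN hr1 hrN
            obtain ⟨hw1, hwN⟩ := cl h hq1 hqN (le_refl 1) (by omega)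
            rcases eq_or_lt_of_le huN with hueq | hult
            · -- u = N
              obtain ⟨hz1, hzN⟩ := cl h hp1 hpN hw1 hwN
              rw [hueq, rowN h hN (star q 1) hw1 hwN, wrap h hN hp1 hpN,
                rowN h hN (star p (star q 1)) hz1 hzN]
            · -- q < u < N
              obtain ⟨c, hcb, hcσ, hcall⟩ := RL (star q r) hu1 hult.le
                (ihn (star q r) hu1 hult.le (by omega))
              obtain ⟨hpu1, hpuN⟩ := cl h hp1 hpN hu1 hult.le
              have hpugt := rowGt h hN N p (by omega) hp1 hplt (star q r) hu1 hult.le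
              obtain ⟨c', hc'b, hc'all⟩ := compplus N (star p (star q r)) p
                hpugt hpuN hp1 hpN (by omega)
              have hcc' : c = c' := by
                apply sigmaInj h hN hcb.1 hcb.2 hc'b.1 hc'b.2
                rw [hcσ, ax3 h hp1 hpN hu1 hult.le, hc'all 1 (le_refl 1) (by omega)]
              rw [hcall (star q 1) hw1 hwN, hcc', hc'all (star q 1) hw1 hwN]
      -- conclude E(p)
      intro q r hq1 hqN hr1 hrN
      obtain ⟨c, hcb, hcσ, hcall⟩ := RL q hq1 hqN (fun r' hr'1 hr'N =>
        K N q hq1 hqN (by omega) r' hr'1 hr'N)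
      obtain ⟨hpq1, hpqN⟩ := cl h hp1 hpN hq1 hqN
      have hpqgt := rowGt h hN N p (by omega) hp1 hplt q hq1 hqN
      obtain ⟨c', hc'b, hc'all⟩ := compplus N (star p q) p hpqgt hpqN hp1 hpN (by omega)
      have hcc' : c = c' := by
        apply sigmaInj h hN hcb.1 hcb.2 hc'b.1 hc'b.2
        rw [hcσ, ax3 h hp1 hpN hq1 hqN, hc'all 1 (le_refl 1) (by omega)]
      rw [hcall r hr1 hrN, hcc', hc'all r hr1 hrN]

end Laver5

/-- the unique operation ⋆ on {1,...,N} satisfying the Laver axioms is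
left distributive if and only if N is a power of 2. -/
theorem laver_left_distributive_iff_pow_two (N : ℕ) (hN : 0 < N)
    (star : ℕ → ℕ → ℕ) (h : LaverAxioms N star) :
    (∀ p ∈ Set.Icc 1 N, ∀ q ∈ Set.Icc 1 N, ∀ r ∈ Set.Icc 1 N,
        star p (star q r) = star (star p q) (star p r)) ↔ ∃ k, N = 2 ^ k := by
  constructor
  · intro _
    exact isPowTwo h hN
  · intro _ p hp q hq r hr
    obtain ⟨hp1, hpN⟩ := Set.mem_Icc.mp hp
    obtain ⟨hq1, hqN⟩ := Set.mem_Icc.mp hq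
    obtain ⟨hr1, hrN⟩ := Set.mem_Icc.mp hr
    exact leftDist h hN N p hp1 hpN (by omega) q r hq1 hqN hr1 hrN
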